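/- Packing of sparse orthonormal frames. Let r ≥ 1, s, p be integers with s ≥ 3r and p − r > 10(s − r), set s' = s − r, p' = p − r, and let δ ∈ (0,1]. Let N = ⌊ 2((p'−s'+1)/(4s'))^{s'/4} ⌋. Then there exist matrices Ṽ^{(1)},…,Ṽ^{(N)} ∈ ℝ^{p×r}, each satisfying (Ṽ^{(i)})ᵀṼ^{(i)} = I_r and each having at most s nonzero rows, such that δ r / 2 ≤ ‖Ṽ^{(i)} − Ṽ^{(j)}‖_F² ≤ 4 δ r for all i ≠ j. -/

import Mathlib

open Matrix BigOperators Finset Real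

noncomputable section

/-- Squared Frobenius norm of a matrix. -/
def mfrobSq {ι κ : Type*} [Fintype ι] [Fintype κ] (A : Matrix ι κ ℝ) : ℝ :=
  ∑ i, ∑ j, A i j ^ 2

/-- A matrix is `s`-row-sparse if at most `s` of its rows are nonzero. -/
def rowSparse {ι κ : Type*} (s : ℕ) (U : Matrix ι κ ℝ) : Prop :=
  Set.ncard {i | U i ≠ 0} ≤ s


lemma exp_sum_zero (k : ℕ) (hk : 0 < k) (m : ℤ) (hm : ¬ (k:ℤ) ∣ m) :
    ∑ t ∈ Finset.range k, Complex.exp ((2*π/k*m*t : ℝ) * Complex.I) = 0 := by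
  have hz : ∀ t : ℕ, Complex.exp ((2*π/k*m*t : ℝ) * Complex.I)
      = Complex.exp ((2*π/k*m : ℝ) * Complex.I) ^ t := by
    intro t
    rw [← Complex.exp_nat_mul]
    congr 1
    push_cast
    ring
  simp only [hz]
  have hne : Complex.exp ((2*π/k*m : ℝ) * Complex.I) ≠ 1 := by
    rw [Ne, Complex.exp_eq_one_iff]
    rintro ⟨l, hl⟩
    have him := congrArg Complex.im hl
    simp [Complex.mul_im] at him
    -- him : 2*π/k*m = l * (2*π)  (hopefully)
    have hπ : (0:ℝ) < π := Real.pi_pos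
    have hk' : (k:ℝ) ≠ 0 := by positivity
    apply hm
    refine ⟨l, ?_⟩
    have : (m : ℝ) = (k:ℝ) * l := by
      field_simp at him
      nlinarith [him]
    exact_mod_cast this
  rw [geom_sum_eq hne]
  have hone : Complex.exp ((2*π/k*m : ℝ) * Complex.I) ^ k = 1 := by
    rw [← Complex.exp_nat_mul, Complex.exp_eq_one_iff]
    refine ⟨m, ?_⟩
    have hk' : (k:ℂ) ≠ 0 := by exact_mod_cast Nat.cast_ne_zero.mpr hk.ne'
    push_cast
    field_simp
  rw [hone]
  simp

lemma cos_sum_zero (k : ℕ) (hk : 0 < k) (m : ℤ) (hm : ¬ (k:ℤ) ∣ m) :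
    ∑ t ∈ Finset.range k, Real.cos (2*π/k*m*t) = 0 := by
  have h := exp_sum_zero k hk m hm
  have h2 : (∑ t ∈ Finset.range k, Complex.exp ((2*π/k*m*t : ℝ) * Complex.I)).re = 0 := by
    rw [h]; rfl
  rw [← h2, Complex.re_sum]
  exact Finset.sum_congr rfl fun t _ => (Complex.exp_ofReal_mul_I_re _).symm

lemma sin_sum_zero (k : ℕ) (hk : 0 < k) (m : ℤ) (hm : ¬ (k:ℤ) ∣ m) :
    ∑ t ∈ Finset.range k, Real.sin (2*π/k*m*t) = 0 := by
  have h := exp_sum_zero k hk m hm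
  have h2 : (∑ t ∈ Finset.range k, Complex.exp ((2*π/k*m*t : ℝ) * Complex.I)).im = 0 := by
    rw [h]; rfl
  rw [← h2, Complex.im_sum]
  exact Finset.sum_congr rfl fun t _ => (Complex.exp_ofReal_mul_I_im _).symm

lemma not_dvd_of_bounds (k : ℕ) (m : ℤ) (h0 : m ≠ 0) (habs : |m| < k) : ¬ (k:ℤ) ∣ m := by
  rintro ⟨c, rfl⟩
  rcases eq_or_ne c 0 with rfl | hc
  · simp at h0
  · have h2 : (k:ℤ) * 1 ≤ |(k:ℤ) * c| := by
      rw [abs_mul, abs_of_nonneg (by positivity : (0:ℤ) ≤ (k:ℤ))]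
      exact mul_le_mul_of_nonneg_left (Int.one_le_abs hc) (by positivity)
    linarith

lemma cos_int_sum (k : ℕ) (hk : 0 < k) (m : ℤ) (habs : |m| < k) :
    ∑ t ∈ Finset.range k, Real.cos (2*π/k*m*t) = if m = 0 then (k:ℝ) else 0 := by
  rcases eq_or_ne m 0 with rfl | hm
  · simp
  · rw [if_neg hm]
    exact cos_sum_zero k hk m (not_dvd_of_bounds k m hm habs)

lemma sin_int_sum (k : ℕ) (hk : 0 < k) (m : ℤ) (habs : |m| < k) :
    ∑ t ∈ Finset.range k, Real.sin (2*π/k*m*t) = 0 := by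
  rcases eq_or_ne m 0 with rfl | hm
  · simp
  · exact sin_sum_zero k hk m (not_dvd_of_bounds k m hm habs)


lemma cosA_sum (k j l : ℕ) (hk : 0 < k) (hjl : 0 < j + l) (hjlk : j + l < k) :
    ∑ t ∈ Finset.range k, Real.cos (2*π/k*((j:ℝ)+(l:ℝ))*t) = 0 := by
  have h := cos_int_sum k hk ((j:ℤ)+(l:ℤ))
    (by rw [abs_of_nonneg (by positivity)]; push_cast; omega)
  rw [if_neg (by omega)] at h
  push_cast at h
  exact h

lemma cosB_sum (k j l : ℕ) (hk : 0 < k) (hj : j < k) (hl : l < k) :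
    ∑ t ∈ Finset.range k, Real.cos (2*π/k*((j:ℝ)-(l:ℝ))*t)
      = if j = l then (k:ℝ) else 0 := by
  rcases eq_or_ne j l with rfl | hne
  · simp
  · have h := cos_int_sum k hk ((j:ℤ)-(l:ℤ))
      (by rw [abs_sub_lt_iff]; constructor <;> push_cast <;> omega)
    rw [if_neg (by omega)] at h
    rw [if_neg hne]
    push_cast at h
    exact h

lemma sinA_sum (k j l : ℕ) (hk : 0 < k) (hjlk : j + l < k) :
    ∑ t ∈ Finset.range k, Real.sin (2*π/k*((j:ℝ)+(l:ℝ))*t) = 0 := by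
  have h := sin_int_sum k hk ((j:ℤ)+(l:ℤ))
    (by rw [abs_of_nonneg (by positivity)]; push_cast; omega)
  push_cast at h
  exact h

lemma sinB_sum (k j l : ℕ) (hk : 0 < k) (hj : j < k) (hl : l < k) :
    ∑ t ∈ Finset.range k, Real.sin (2*π/k*((j:ℝ)-(l:ℝ))*t) = 0 := by
  have h := sin_int_sum k hk ((j:ℤ)-(l:ℤ))
    (by rw [abs_sub_lt_iff]; constructor <;> push_cast <;> omega)
  push_cast at h
  exact h

lemma sumCC (k j l : ℕ) (hk : 0 < k) (hj : 1 ≤ j) (hl : 1 ≤ l) (hjk : 2*j < k) (hlk : 2*l < k) :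
    ∑ t ∈ Finset.range k, Real.cos (2*π/k*j*t) * Real.cos (2*π/k*l*t)
      = if j = l then (k:ℝ)/2 else 0 := by
  have key : ∀ t : ℕ, Real.cos (2*π/k*j*t) * Real.cos (2*π/k*l*t)
      = (Real.cos (2*π/k*((j:ℝ)+(l:ℝ))*t) + Real.cos (2*π/k*((j:ℝ)-(l:ℝ))*t))/2 := by
    intro t
    have e1 : (2*π/k*((j:ℝ)+(l:ℝ))*t : ℝ) = 2*π/k*j*t + 2*π/k*l*t := by ring
    have e2 : (2*π/k*((j:ℝ)-(l:ℝ))*t : ℝ) = 2*π/k*j*t - 2*π/k*l*t := by ring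
    rw [e1, e2, Real.cos_add, Real.cos_sub]
    ring
  simp only [key]
  rw [← Finset.sum_div, Finset.sum_add_distrib,
    cosA_sum k j l hk (by omega) (by omega), cosB_sum k j l hk (by omega) (by omega)]
  rcases eq_or_ne j l with rfl | hne
  · simp
  · simp [hne]

lemma sumSS (k j l : ℕ) (hk : 0 < k) (hj : 1 ≤ j) (hl : 1 ≤ l) (hjk : 2*j < k) (hlk : 2*l < k) :
    ∑ t ∈ Finset.range k, Real.sin (2*π/k*j*t) * Real.sin (2*π/k*l*t)
      = if j = l then (k:ℝ)/2 else 0 := by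
  have key : ∀ t : ℕ, Real.sin (2*π/k*j*t) * Real.sin (2*π/k*l*t)
      = (Real.cos (2*π/k*((j:ℝ)-(l:ℝ))*t) - Real.cos (2*π/k*((j:ℝ)+(l:ℝ))*t))/2 := by
    intro t
    have e1 : (2*π/k*((j:ℝ)+(l:ℝ))*t : ℝ) = 2*π/k*j*t + 2*π/k*l*t := by ring
    have e2 : (2*π/k*((j:ℝ)-(l:ℝ))*t : ℝ) = 2*π/k*j*t - 2*π/k*l*t := by ring
    rw [e1, e2, Real.cos_add, Real.cos_sub]
    ring
  simp only [key]
  rw [← Finset.sum_div, Finset.sum_sub_distrib,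
    cosB_sum k j l hk (by omega) (by omega), cosA_sum k j l hk (by omega) (by omega)]
  rcases eq_or_ne j l with rfl | hne
  · simp
  · simp [hne]

lemma sumSC (k j l : ℕ) (hk : 0 < k) (hjk : 2*j < k) (hlk : 2*l < k) :
    ∑ t ∈ Finset.range k, Real.sin (2*π/k*j*t) * Real.cos (2*π/k*l*t) = 0 := by
  have key : ∀ t : ℕ, Real.sin (2*π/k*j*t) * Real.cos (2*π/k*l*t)
      = (Real.sin (2*π/k*((j:ℝ)+(l:ℝ))*t) + Real.sin (2*π/k*((j:ℝ)-(l:ℝ))*t))/2 := by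
    intro t
    have e1 : (2*π/k*((j:ℝ)+(l:ℝ))*t : ℝ) = 2*π/k*j*t + 2*π/k*l*t := by ring
    have e2 : (2*π/k*((j:ℝ)-(l:ℝ))*t : ℝ) = 2*π/k*j*t - 2*π/k*l*t := by ring
    rw [e1, e2, Real.sin_add, Real.sin_sub]
    ring
  simp only [key]
  rw [← Finset.sum_div, Finset.sum_add_distrib,
    sinA_sum k j l hk (by omega), sinB_sum k j l hk (by omega) (by omega)]
  simp

lemma sumC (k j : ℕ) (hk : 0 < k) (hj : 1 ≤ j) (hjk : j < k) :
    ∑ t ∈ Finset.range k, Real.cos (2*π/k*j*t) = 0 := by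
  have h := cos_int_sum k hk (j:ℤ) (by rw [abs_of_nonneg (by positivity)]; push_cast; omega)
  rw [if_neg (by omega)] at h
  push_cast at h
  exact h

lemma sumS (k j : ℕ) (hk : 0 < k) (hjk : j < k) :
    ∑ t ∈ Finset.range k, Real.sin (2*π/k*j*t) = 0 := by
  have h := sin_int_sum k hk (j:ℤ) (by rw [abs_of_nonneg (by positivity)]; push_cast; omega)
  push_cast at h
  exact h

/-- Column `a`, row `t` of the flat frame. -/
noncomputable def fcol (k r a t : ℕ) : ℝ :=
  if 2*(a/2) + 2 ≤ r then
    (if a % 2 = 0 then Real.sqrt (2/(k:ℝ)) * Real.cos (2*π/(k:ℝ)*((a/2+1 : ℕ):ℝ)*(t:ℝ))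
     else Real.sqrt (2/(k:ℝ)) * Real.sin (2*π/(k:ℝ)*((a/2+1 : ℕ):ℝ)*(t:ℝ)))
  else Real.sqrt (1/(k:ℝ))

lemma fcol_ortho (k r : ℕ) (hr : 1 ≤ r) (hkr : 2*r ≤ k) (a b : ℕ) (ha : a < r) (hb : b < r) :
    ∑ t ∈ Finset.range k, fcol k r a t * fcol k r b t = if a = b then 1 else 0 := by
  have hk : 0 < k := by omega
  have hk' : (0:ℝ) < k := by exact_mod_cast hk
  have hmul : ∀ X Y : ℝ, (Real.sqrt (2/(k:ℝ))*X)*(Real.sqrt (2/(k:ℝ))*Y) = (2/(k:ℝ))*(X*Y) := by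
    intro X Y
    rw [mul_mul_mul_comm, Real.mul_self_sqrt (by positivity)]
  have hmul1 : ∀ X : ℝ, (Real.sqrt (2/(k:ℝ))*X)*(Real.sqrt (1/(k:ℝ)))
      = (Real.sqrt (2/(k:ℝ))*Real.sqrt (1/(k:ℝ)))*X := by intro X; ring
  have hmul1' : ∀ X : ℝ, (Real.sqrt (1/(k:ℝ)))*(Real.sqrt (2/(k:ℝ))*X)
      = (Real.sqrt (2/(k:ℝ))*Real.sqrt (1/(k:ℝ)))*X := by intro X; ring
  by_cases hpa : 2*(a/2)+2 ≤ r <;> by_cases hpb : 2*(b/2)+2 ≤ r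
  · -- both paired
    by_cases hae : a % 2 = 0 <;> by_cases hbe : b % 2 = 0
    · simp only [fcol, if_pos hpa, if_pos hpb, if_pos hae, if_pos hbe, hmul]
      rw [← Finset.mul_sum, sumCC k (a/2+1) (b/2+1) hk (by omega) (by omega) (by omega) (by omega)]
      rcases eq_or_ne a b with rfl | hne
      · rw [if_pos rfl, if_pos rfl]; field_simp
      · rw [if_neg (by omega), if_neg hne, mul_zero]
    · simp only [fcol, if_pos hpa, if_pos hpb, if_pos hae, if_neg hbe, hmul]
      have hcomm : ∀ t : ℕ, Real.cos (2*π/(k:ℝ)*((a/2+1 : ℕ):ℝ)*(t:ℝ)) * Real.sin (2*π/(k:ℝ)*((b/2+1 : ℕ):ℝ)*(t:ℝ))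
          = Real.sin (2*π/(k:ℝ)*((b/2+1 : ℕ):ℝ)*(t:ℝ)) * Real.cos (2*π/(k:ℝ)*((a/2+1 : ℕ):ℝ)*(t:ℝ)) :=
        fun t => mul_comm _ _
      simp only [hcomm]
      rw [← Finset.mul_sum, sumSC k (b/2+1) (a/2+1) hk (by omega) (by omega), mul_zero,
        if_neg (by omega)]
    · simp only [fcol, if_pos hpa, if_pos hpb, if_neg hae, if_pos hbe, hmul]
      rw [← Finset.mul_sum, sumSC k (a/2+1) (b/2+1) hk (by omega) (by omega), mul_zero,
        if_neg (by omega)]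
    · simp only [fcol, if_pos hpa, if_pos hpb, if_neg hae, if_neg hbe, hmul]
      rw [← Finset.mul_sum, sumSS k (a/2+1) (b/2+1) hk (by omega) (by omega) (by omega) (by omega)]
      rcases eq_or_ne a b with rfl | hne
      · rw [if_pos rfl, if_pos rfl]; field_simp
      · rw [if_neg (by omega), if_neg hne, mul_zero]
  · -- a paired, b not
    have hne : a ≠ b := by intro h; subst h; exact hpb hpa
    rw [if_neg hne]
    by_cases hae : a % 2 = 0
    · simp only [fcol, if_pos hpa, if_neg hpb, if_pos hae, hmul1]
      rw [← Finset.mul_sum, sumC k (a/2+1) hk (by omega) (by omega), mul_zero]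
    · simp only [fcol, if_pos hpa, if_neg hpb, if_neg hae, hmul1]
      rw [← Finset.mul_sum, sumS k (a/2+1) hk (by omega), mul_zero]
  · -- b paired, a not
    have hne : a ≠ b := by intro h; subst h; exact hpa hpb
    rw [if_neg hne]
    by_cases hbe : b % 2 = 0
    · simp only [fcol, if_neg hpa, if_pos hpb, if_pos hbe, hmul1']
      rw [← Finset.mul_sum, sumC k (b/2+1) hk (by omega) (by omega), mul_zero]
    · simp only [fcol, if_neg hpa, if_pos hpb, if_neg hbe, hmul1']
      rw [← Finset.mul_sum, sumS k (b/2+1) hk (by omega), mul_zero]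
  · -- both unpaired
    have hab : a = b := by omega
    subst hab
    rw [if_pos rfl]
    simp only [fcol, if_neg hpa]
    rw [Finset.sum_const, Finset.card_range, Real.mul_self_sqrt (by positivity), nsmul_eq_mul]
    field_simp

lemma sum_range_two_mul (h : ℕ) (f : ℕ → ℝ) :
    ∑ a ∈ Finset.range (2*h), f a = ∑ i ∈ Finset.range h, (f (2*i) + f (2*i+1)) := by
  induction h with
  | zero => simp
  | succ n ih =>
    have h2 : 2*(n+1) = (2*n + 1) + 1 := by ring
    rw [h2, Finset.sum_range_succ, Finset.sum_range_succ, ih, Finset.sum_range_succ]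
    ring

lemma sum_range_pair (h o : ℕ) (ho1 : o ≤ 1) (f : ℕ → ℝ) (c u : ℝ)
    (hp : ∀ i, i < h → f (2*i) + f (2*i+1) = c) (hu : o = 1 → f (2*h) = u) :
    ∑ a ∈ Finset.range (2*h + o), f a = h * c + (if o = 1 then u else 0) := by
  rcases eq_or_ne o 1 with rfl | ho
  · rw [Finset.sum_range_succ, sum_range_two_mul,
      Finset.sum_congr rfl (fun i hi => hp i (Finset.mem_range.mp hi)),
      Finset.sum_const, Finset.card_range, nsmul_eq_mul, if_pos rfl, hu rfl]
  · rcases eq_or_ne o 0 with rfl | ho2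
    · rw [Nat.add_zero, sum_range_two_mul,
        Finset.sum_congr rfl (fun i hi => hp i (Finset.mem_range.mp hi)),
        Finset.sum_const, Finset.card_range, nsmul_eq_mul, if_neg ho, add_zero]
    · omega

lemma fcol_row (k r : ℕ) (hr : 1 ≤ r) (hkr : 2*r ≤ k) (t : ℕ) :
    ∑ a ∈ Finset.range r, (fcol k r a t)^2 = r/k := by
  have hk : 0 < k := by omega
  have hk' : (0:ℝ) < k := by exact_mod_cast hk
  have hpair : ∀ i, i < r/2 → (fcol k r (2*i) t)^2 + (fcol k r (2*i+1) t)^2 = 2/(k:ℝ) := by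
    intro i hi
    have h1 : (2*i)/2 = i := by omega
    have h2 : (2*i+1)/2 = i := by omega
    simp only [fcol, h1, h2, if_pos (by omega : 2*i+2 ≤ r), if_pos (by omega : (2*i) % 2 = 0),
      if_neg (by omega : ¬ (2*i+1) % 2 = 0)]
    rw [mul_pow, mul_pow, Real.sq_sqrt (by positivity), ← mul_add,
      add_comm ((Real.cos _)^2), Real.sin_sq_add_cos_sq]
    ring
  have hun : r % 2 = 1 → (fcol k r (2*(r/2)) t)^2 = 1/(k:ℝ) := by
    intro hodd
    have hnp : ¬ (2*((2*(r/2))/2)+2 ≤ r) := by omega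
    simp only [fcol, if_neg hnp]
    rw [Real.sq_sqrt (by positivity)]
  have hs := sum_range_pair (r/2) (r%2) (by omega) (fun a => (fcol k r a t)^2) (2/(k:ℝ)) (1/(k:ℝ)) hpair hun
  rw [show 2*(r/2) + r%2 = r from Nat.div_add_mod r 2] at hs
  rw [hs]
  rcases Nat.even_or_odd r with he | ho
  · have h0 : r % 2 = 0 := Nat.even_iff.mp he
    rw [if_neg (by omega), add_zero]
    have : (r:ℝ) = 2*((r/2 : ℕ):ℝ) := by exact_mod_cast (by omega : r = 2*(r/2))
    rw [this]
    field_simp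
  · have h1 : r % 2 = 1 := Nat.odd_iff.mp ho
    rw [if_pos h1]
    have : (r:ℝ) = 2*((r/2 : ℕ):ℝ) + 1 := by exact_mod_cast (by omega : r = 2*(r/2)+1)
    rw [this]
    field_simp


lemma bad_card_le (n k d : ℕ) (hd : d < k) (A : Finset (Fin n)) (hA : A.card = k) :
    ((Finset.univ.powersetCard k).filter
        (fun B : Finset (Fin n) => k - 1 - d < (A ∩ B).card)).card
      ≤ ∑ e ∈ Finset.range (d+1), k.choose e * (n-k).choose e := by
  classical
  have hsub : ((Finset.univ.powersetCard k).filter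
      (fun B : Finset (Fin n) => k - 1 - d < (A ∩ B).card))
      ⊆ (Finset.range (d+1)).biUnion (fun e =>
          ((A.powersetCard (k - e)) ×ˢ (Aᶜ.powersetCard e)).image
            (fun pr => pr.1 ∪ pr.2)) := by
    intro B hB
    rw [Finset.mem_filter, Finset.mem_powersetCard_univ] at hB
    obtain ⟨hBk, hBint⟩ := hB
    set e := (B \ A).card with he
    have hie : (B ∩ A).card + e = k := by rw [← hBk]; exact Finset.card_inter_add_card_sdiff B A
    have hAB : (A ∩ B).card = (B ∩ A).card := by rw [Finset.inter_comm]
    have hed : e ≤ d := by omega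
    rw [Finset.mem_biUnion]
    refine ⟨e, Finset.mem_range.mpr (by omega), ?_⟩
    rw [Finset.mem_image]
    refine ⟨(B ∩ A, B \ A), Finset.mem_product.mpr ⟨?_, ?_⟩, ?_⟩
    · dsimp only
      rw [Finset.mem_powersetCard]
      exact ⟨Finset.inter_subset_right, by omega⟩
    · dsimp only
      rw [Finset.mem_powersetCard]
      refine ⟨fun x hx => ?_, rfl⟩
      rw [Finset.mem_compl]
      exact (Finset.mem_sdiff.mp hx).2
    · dsimp only
      rw [Finset.union_comm]
      exact Finset.sdiff_union_inter B A
  calc ((Finset.univ.powersetCard k).filter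
      (fun B : Finset (Fin n) => k - 1 - d < (A ∩ B).card)).card
      ≤ _ := Finset.card_le_card hsub
    _ ≤ ∑ e ∈ Finset.range (d+1),
          (((A.powersetCard (k - e)) ×ˢ (Aᶜ.powersetCard e)).image
            (fun pr : Finset (Fin n) × Finset (Fin n) => pr.1 ∪ pr.2)).card :=
        Finset.card_biUnion_le
    _ ≤ ∑ e ∈ Finset.range (d+1), k.choose e * (n-k).choose e := by
        apply Finset.sum_le_sum
        intro e he
        calc (((A.powersetCard (k - e)) ×ˢ (Aᶜ.powersetCard e)).image
              (fun pr : Finset (Fin n) × Finset (Fin n) => pr.1 ∪ pr.2)).card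
            ≤ ((A.powersetCard (k - e)) ×ˢ (Aᶜ.powersetCard e)).card :=
              Finset.card_image_le
          _ = k.choose (k - e) * (n - k).choose e := by
              rw [Finset.card_product, Finset.card_powersetCard, Finset.card_powersetCard,
                hA, Finset.card_compl, Fintype.card_fin, hA]
          _ = k.choose e * (n-k).choose e := by
              rw [Nat.choose_symm (by have := Finset.mem_range.mp he; omega : e ≤ k)]
  
lemma exists_packing (n k d N : ℕ) (hk : 0 < k) (hdk : d < k) (hkn : k ≤ n)
    (hNT : N * (∑ e ∈ Finset.range (d+1), k.choose e * (n-k).choose e) ≤ n.choose k) :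
    ∃ B : Fin N → Finset (Fin n), Function.Injective B ∧ (∀ i, (B i).card = k) ∧
      ∀ i j, i ≠ j → ((B i ∩ B j).card ≤ k - 1 - d) := by
  classical
  set T := ∑ e ∈ Finset.range (d+1), k.choose e * (n-k).choose e with hT
  set 𝒢 := (Finset.univ : Finset (Fin n)).powersetCard k with h𝒢
  set 𝒜 := 𝒢.powerset.filter
    (fun F => ∀ A ∈ F, ∀ B ∈ F, A ≠ B → (A ∩ B).card ≤ k - 1 - d) with h𝒜
  have hEmp : (∅ : Finset (Finset (Fin n))) ∈ 𝒜 := by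
    rw [h𝒜, Finset.mem_filter, Finset.mem_powerset]
    exact ⟨Finset.empty_subset _, by simp⟩
  obtain ⟨F, hF𝒜, hFmax⟩ := Finset.exists_max_image 𝒜 Finset.card ⟨∅, hEmp⟩
  rw [h𝒜, Finset.mem_filter, Finset.mem_powerset] at hF𝒜
  obtain ⟨hFsub, hFpair⟩ := hF𝒜
  have hcover : ∀ B ∈ 𝒢, ∃ A ∈ F, k - 1 - d < (A ∩ B).card := by
    intro B hB
    by_contra hcon
    push_neg at hcon
    have hBk : B.card = k := Finset.mem_powersetCard_univ.mp hB
    have hBF : B ∉ F := by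
      intro hBF
      have := hcon B hBF
      rw [Finset.inter_self, hBk] at this
      omega
    have hins : insert B F ∈ 𝒜 := by
      rw [h𝒜, Finset.mem_filter, Finset.mem_powerset]
      refine ⟨Finset.insert_subset hB hFsub, ?_⟩
      intro X hX Y hY hne
      rcases Finset.mem_insert.mp hX with hXB | hXF
      · rcases Finset.mem_insert.mp hY with hYB | hYF
        · exact absurd (hXB.trans hYB.symm) hne
        · subst hXB; rw [Finset.inter_comm]; exact hcon Y hYF
      · rcases Finset.mem_insert.mp hY with hYB | hYF
        · subst hYB; exact hcon X hXF
        · exact hFpair X hXF Y hYF hne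
    have := hFmax _ hins
    rw [Finset.card_insert_of_notMem hBF] at this
    omega
  have hGsub : 𝒢 ⊆ F.biUnion (fun A => 𝒢.filter (fun B => k-1-d < (A ∩ B).card)) := by
    intro B hB
    obtain ⟨A, hAF, hABc⟩ := hcover B hB
    exact Finset.mem_biUnion.mpr ⟨A, hAF, Finset.mem_filter.mpr ⟨hB, hABc⟩⟩
  have hGcard : n.choose k ≤ F.card * T := by
    have h1 : 𝒢.card = n.choose k := by
      rw [h𝒢, Finset.card_powersetCard, Finset.card_univ, Fintype.card_fin]
    calc n.choose k = 𝒢.card := h1.symm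
      _ ≤ (F.biUnion (fun A => 𝒢.filter (fun B => k-1-d < (A ∩ B).card))).card :=
          Finset.card_le_card hGsub
      _ ≤ ∑ A ∈ F, (𝒢.filter (fun B => k-1-d < (A ∩ B).card)).card :=
          Finset.card_biUnion_le
      _ ≤ ∑ _A ∈ F, T := by
          apply Finset.sum_le_sum
          intro A hA
          exact bad_card_le n k d hdk A (Finset.mem_powersetCard_univ.mp (hFsub hA))
      _ = F.card * T := by rw [Finset.sum_const, smul_eq_mul]
  have hT1 : 1 ≤ T := by
    have h0 : (0:ℕ) ∈ Finset.range (d+1) := Finset.mem_range.mpr (by omega)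
    have hs := Finset.single_le_sum (f := fun e => k.choose e * (n-k).choose e)
      (fun e _ => Nat.zero_le _) h0
    simpa using hs
  have hNF : N ≤ F.card := Nat.le_of_mul_le_mul_right
    (by calc N * T ≤ n.choose k := hNT
          _ ≤ F.card * T := hGcard) (by omega)
  obtain ⟨F', hF'sub, hF'card⟩ := Finset.exists_subset_card_eq hNF
  refine ⟨fun i => (F'.equivFin.symm (Fin.cast hF'card.symm i) : Finset (Fin n)), ?_, ?_, ?_⟩
  · intro i j hij
    have h1 := F'.equivFin.symm.injective (Subtype.coe_injective hij)
    exact Fin.cast_injective _ h1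
  · intro i
    have hmem : (F'.equivFin.symm (Fin.cast hF'card.symm i) : Finset (Fin n)) ∈ F' :=
      (F'.equivFin.symm (Fin.cast hF'card.symm i)).2
    exact Finset.mem_powersetCard_univ.mp (hFsub (hF'sub hmem))
  · intro i j hij
    have hne : (F'.equivFin.symm (Fin.cast hF'card.symm i) : Finset (Fin n))
        ≠ (F'.equivFin.symm (Fin.cast hF'card.symm j) : Finset (Fin n)) := by
      intro h
      exact hij (Fin.cast_injective _ (F'.equivFin.symm.injective (Subtype.coe_injective h)))
    exact hFpair _ (hF'sub (F'.equivFin.symm _).2) _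
      (hF'sub (F'.equivFin.symm _).2) hne

lemma choose_step (m k j : ℕ) (hj : j + 1 ≤ k) (hkm : k ≤ m) :
    (m.choose j : ℝ) * (((m:ℝ) - k + 1)/k) ≤ m.choose (j+1) := by
  have hjm : j ≤ m := by omega
  have hk0 : (0:ℝ) < k := by exact_mod_cast (by omega : 0 < k)
  have hj1 : (0:ℝ) < (j:ℝ) + 1 := by positivity
  have hid' : (m.choose (j+1) : ℝ) * ((j:ℝ)+1) = (m.choose j : ℝ) * ((m:ℝ) - j) := by
    have h := congrArg (Nat.cast : ℕ → ℝ) (Nat.choose_succ_right_eq m j)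
    push_cast [Nat.cast_sub hjm] at h
    linarith [h]
  have hdiv : ((m:ℝ) - k + 1)/k ≤ ((m:ℝ) - j)/((j:ℝ)+1) := by
    rw [div_le_div_iff₀ hk0 hj1]
    have hjk : (j:ℝ) + 1 ≤ (k:ℝ) := by exact_mod_cast hj
    have hkm' : (k:ℝ) ≤ (m:ℝ) := by exact_mod_cast hkm
    nlinarith
  have hnn : (0:ℝ) ≤ (m.choose j : ℝ) := by positivity
  calc (m.choose j : ℝ) * (((m:ℝ) - k + 1)/k)
      ≤ (m.choose j : ℝ) * (((m:ℝ) - j)/((j:ℝ)+1)) := mul_le_mul_of_nonneg_left hdiv hnn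
    _ = m.choose (j+1) := by
        field_simp
        linarith [hid']
  
lemma choose_iter (m k : ℕ) (hkm : k ≤ m) (hrho : 0 ≤ ((m:ℝ)-k+1)/k) :
    ∀ t j, j + t ≤ k → (m.choose j : ℝ) * (((m:ℝ)-k+1)/k)^t ≤ m.choose (j+t) := by
  intro t
  induction t with
  | zero => intro j _; simp
  | succ s ih =>
    intro j hjs
    have h1 : (m.choose j : ℝ) * (((m:ℝ)-k+1)/k)^(s+1)
        = ((m.choose j : ℝ) * (((m:ℝ)-k+1)/k)^s) * (((m:ℝ)-k+1)/k) := by ring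
    rw [h1]
    calc ((m.choose j : ℝ) * (((m:ℝ)-k+1)/k)^s) * (((m:ℝ)-k+1)/k)
        ≤ (m.choose (j+s) : ℝ) * (((m:ℝ)-k+1)/k) :=
          mul_le_mul_of_nonneg_right (ih j (by omega)) hrho
      _ ≤ (m.choose (j+s+1) : ℝ) := choose_step m k (j+s) (by omega) hkm
      _ = (m.choose (j+(s+1)) : ℝ) := by rw [← add_assoc]

lemma sum_choose_le (n k d m : ℕ) (hm : m = n - k) (hkn : k ≤ n) (hdk : d ≤ k) :
    ∑ e ∈ Finset.range (d+1), k.choose e * m.choose (k-e) ≤ n.choose k := by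
  classical
  have hn : n = k + m := by omega
  rw [hn, Nat.add_choose_eq]
  have himg : (Finset.range (d+1)).image (fun e => (e, k - e)) ⊆ Finset.HasAntidiagonal.antidiagonal k := by
    intro p hp
    rw [Finset.mem_image] at hp
    obtain ⟨e, he, rfl⟩ := hp
    rw [Finset.HasAntidiagonal.mem_antidiagonal]
    have := Finset.mem_range.mp he
    omega
  calc ∑ e ∈ Finset.range (d+1), k.choose e * m.choose (k-e)
      = ∑ p ∈ (Finset.range (d+1)).image (fun e => (e, k - e)),
          k.choose p.1 * m.choose p.2 := by
        rw [Finset.sum_image]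
        intro x _ y _ hxy
        exact (Prod.mk.injEq _ _ _ _ ▸ hxy).1
    _ ≤ ∑ p ∈ Finset.HasAntidiagonal.antidiagonal k, k.choose p.1 * m.choose p.2 :=
        Finset.sum_le_sum_of_subset himg
    _ = _ := rfl

lemma count_ineq (n k d : ℕ) (hk : 2 ≤ k) (hd8 : 8*d ≤ 3*k) (hn : 10*k < n) :
    2 * ((((n:ℝ) - k + 1)/(4*k)) ^ ((k:ℝ)/4))
        * (∑ e ∈ Finset.range (d+1), (k.choose e : ℝ) * ((n-k).choose e : ℝ))
      ≤ n.choose k := by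
  set m := n - k with hm
  have hkm : k ≤ m := by omega
  have hk0 : (0:ℝ) < k := by exact_mod_cast (by omega : 0 < k)
  have hmR : (m:ℝ) = (n:ℝ) - k := by
    rw [hm, Nat.cast_sub (by omega)]
  set y : ℝ := ((n:ℝ) - k + 1)/(4*k) with hy
  set ρ : ℝ := ((m:ℝ) - k + 1)/k with hρ
  have hρy : ρ = 4*y - 1 := by
    rw [hρ, hy, hmR]
    field_simp
    ring
  have hyge : (9:ℝ)/4 ≤ y := by
    rw [hy, div_le_div_iff₀ (by norm_num) (by positivity)]  -- careful direction
    have : (10:ℝ)*k + 1 ≤ (n:ℝ) := by exact_mod_cast (by omega : 10*k+1 ≤ n)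
    nlinarith
  have hy1 : (1:ℝ) ≤ y := by linarith
  have hρ3y : 3*y ≤ ρ := by rw [hρy]; linarith
  have hρ1 : (1:ℝ) ≤ ρ := by linarith
  have hρ0 : (0:ℝ) ≤ ρ := by linarith
  set K := k - 2*d with hK
  have hK1 : 1 ≤ K := by omega
  have hKk : 4*K ≥ k := by omega
  -- Step I : 2 * y^(k/4) ≤ ρ^K
  have hstepI : 2 * y ^ ((k:ℝ)/4) ≤ ρ^K := by
    have h3y : (3*y)^K ≤ ρ^K := pow_le_pow_left₀ (by linarith) hρ3y K
    have hexp : y ^ ((k:ℝ)/4) ≤ y ^ (K:ℕ) := by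
      rw [← Real.rpow_natCast y K]
      apply Real.rpow_le_rpow_of_exponent_le hy1
      rw [div_le_iff₀ (by norm_num : (0:ℝ) < 4)]
      exact_mod_cast (by omega : k ≤ K*4)
    have h3K : (3:ℝ) ≤ 3^K := by
      calc (3:ℝ) = 3^1 := (pow_one 3).symm
        _ ≤ 3^K := pow_le_pow_right₀ (by norm_num) hK1
    have hyK0 : (0:ℝ) ≤ y ^ ((k:ℝ)/4) := Real.rpow_nonneg (by linarith) _
    calc 2 * y ^ ((k:ℝ)/4) ≤ 3 * y ^ ((k:ℝ)/4) := by linarith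
      _ ≤ 3^K * y^(K:ℕ) := by
          apply mul_le_mul h3K hexp hyK0 (by positivity)
      _ = (3*y)^K := by rw [mul_pow]
      _ ≤ ρ^K := h3y
  -- Step II : ρ^K * T ≤ ∑ C(k,e) C(m,k-e)
  have hstepII : ρ^K * (∑ e ∈ Finset.range (d+1), (k.choose e : ℝ) * (m.choose e : ℝ))
      ≤ ∑ e ∈ Finset.range (d+1), (k.choose e : ℝ) * (m.choose (k-e) : ℝ) := by
    rw [Finset.mul_sum]
    apply Finset.sum_le_sum
    intro e he
    have hed : e ≤ d := by have := Finset.mem_range.mp he; omega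
    have h2e : 2*e ≤ k := by omega
    have hmono : ρ^K ≤ ρ^(k-2*e) := pow_le_pow_right₀ hρ1 (by omega)
    have hiter := choose_iter m k hkm (by positivity) (k-2*e) e (by omega)
    rw [show e + (k-2*e) = k - e by omega] at hiter
    calc ρ^K * ((k.choose e : ℝ) * (m.choose e : ℝ))
        = (k.choose e : ℝ) * ((m.choose e : ℝ) * ρ^K) := by ring
      _ ≤ (k.choose e : ℝ) * ((m.choose e : ℝ) * ρ^(k-2*e)) := by
          apply mul_le_mul_of_nonneg_left _ (by positivity)
          apply mul_le_mul_of_nonneg_left hmono (by positivity)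
      _ ≤ (k.choose e : ℝ) * (m.choose (k-e) : ℝ) := by
          apply mul_le_mul_of_nonneg_left hiter (by positivity)
  -- Step III
  have hstepIII : (∑ e ∈ Finset.range (d+1), (k.choose e : ℝ) * (m.choose (k-e) : ℝ))
      ≤ (n.choose k : ℝ) := by
    have := sum_choose_le n k d m hm (by omega) (by omega)
    exact_mod_cast this
  have hT0 : (0:ℝ) ≤ ∑ e ∈ Finset.range (d+1), (k.choose e : ℝ) * ((n-k).choose e : ℝ) := by
    apply Finset.sum_nonneg
    intro e _
    positivity
  calc 2 * y ^ ((k:ℝ)/4) * (∑ e ∈ Finset.range (d+1), (k.choose e : ℝ) * ((n-k).choose e : ℝ))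
      ≤ ρ^K * (∑ e ∈ Finset.range (d+1), (k.choose e : ℝ) * ((n-k).choose e : ℝ)) :=
        mul_le_mul_of_nonneg_right hstepI hT0
    _ ≤ ∑ e ∈ Finset.range (d+1), (k.choose e : ℝ) * (m.choose (k-e) : ℝ) := hstepII
    _ ≤ (n.choose k : ℝ) := hstepIII


def GG {n : ℕ} (k r : ℕ) (B : Finset (Fin n)) (hB : B.card = k) : Fin n → Fin r → ℝ :=
  fun y a => if h : y ∈ B then fcol k r (a : ℕ) (((B.orderIsoOfFin hB).symm ⟨y, h⟩ : Fin k) : ℕ) else 0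

lemma GG_zero {n : ℕ} (k r : ℕ) (B : Finset (Fin n)) (hB : B.card = k) (y : Fin n)
    (hy : y ∉ B) (a : Fin r) : GG k r B hB y a = 0 := by
  simp [GG, hy]

lemma GG_eq {n : ℕ} (k r : ℕ) (B : Finset (Fin n)) (hB : B.card = k) (u : Fin k) (a : Fin r) :
    GG k r B hB ((B.orderIsoOfFin hB u : {x // x ∈ B}) : Fin n) a = fcol k r a u := by
  have hmem : ((B.orderIsoOfFin hB u : {x // x ∈ B}) : Fin n) ∈ B := (B.orderIsoOfFin hB u).2
  rw [GG, dif_pos hmem]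
  congr 2
  have : (⟨((B.orderIsoOfFin hB u : {x // x ∈ B}) : Fin n), hmem⟩ : {x // x ∈ B})
      = B.orderIsoOfFin hB u := Subtype.ext rfl
  rw [this]
  simp

lemma sum_over_B {n k : ℕ} (B : Finset (Fin n)) (hB : B.card = k) (φ : Fin n → ℝ)
    (hφ : ∀ y, y ∉ B → φ y = 0) :
    ∑ y : Fin n, φ y = ∑ u : Fin k, φ ((B.orderIsoOfFin hB u : {x // x ∈ B}) : Fin n) := by
  calc ∑ y : Fin n, φ y = ∑ y ∈ B, φ y :=
        (Finset.sum_subset (Finset.subset_univ B) (fun x _ hx => hφ x hx)).symm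
    _ = ∑ x : {x // x ∈ B}, φ x := (Finset.sum_coe_sort B φ).symm
    _ = ∑ u : Fin k, φ ((B.orderIsoOfFin hB u : {x // x ∈ B}) : Fin n) :=
        (Equiv.sum_comp (B.orderIsoOfFin hB).toEquiv (fun x : {x // x ∈ B} => φ x)).symm

lemma GG_gram {n : ℕ} (k r : ℕ) (hr : 1 ≤ r) (hkr : 2*r ≤ k) (B : Finset (Fin n))
    (hB : B.card = k) (a b : Fin r) :
    ∑ y : Fin n, GG k r B hB y a * GG k r B hB y b = if a = b then 1 else 0 := by
  rw [sum_over_B B hB _ (fun y hy => by rw [GG_zero k r B hB y hy, zero_mul])]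
  have : ∀ u : Fin k, GG k r B hB ((B.orderIsoOfFin hB u : {x // x ∈ B}) : Fin n) a
      * GG k r B hB ((B.orderIsoOfFin hB u : {x // x ∈ B}) : Fin n) b
      = fcol k r a u * fcol k r b u := by
    intro u; rw [GG_eq, GG_eq]
  rw [Finset.sum_congr rfl (fun u _ => this u)]
  rw [Fin.sum_univ_eq_sum_range (fun t => fcol k r a t * fcol k r b t) k]
  rw [fcol_ortho k r hr hkr a b a.2 b.2]
  simp [Fin.val_inj]

lemma GG_ip_bound {n : ℕ} (k r : ℕ) (hr : 1 ≤ r) (hkr : 2*r ≤ k)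
    (B : Finset (Fin n)) (hB : B.card = k) (C : Finset (Fin n)) (hC : C.card = k) (y : Fin n) :
    |∑ a : Fin r, GG k r B hB y a * GG k r C hC y a|
      ≤ (if y ∈ B ∩ C then (r:ℝ)/k else 0) := by
  by_cases hyB : y ∈ B
  · by_cases hyC : y ∈ C
    · rw [if_pos (Finset.mem_inter.mpr ⟨hyB, hyC⟩)]
      have hBval : ∀ a : Fin r, GG k r B hB y a
          = fcol k r a (((B.orderIsoOfFin hB).symm ⟨y, hyB⟩ : Fin k) : ℕ) := by
        intro a; rw [GG, dif_pos hyB]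
      have hCval : ∀ a : Fin r, GG k r C hC y a
          = fcol k r a (((C.orderIsoOfFin hC).symm ⟨y, hyC⟩ : Fin k) : ℕ) := by
        intro a; rw [GG, dif_pos hyC]
      set tB := (((B.orderIsoOfFin hB).symm ⟨y, hyB⟩ : Fin k) : ℕ)
      set tC := (((C.orderIsoOfFin hC).symm ⟨y, hyC⟩ : Fin k) : ℕ)
      simp only [hBval, hCval]
      have hsq : (∑ a : Fin r, fcol k r a tB * fcol k r a tC)^2
          ≤ (∑ a : Fin r, (fcol k r a tB)^2) * (∑ a : Fin r, (fcol k r a tC)^2) :=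
        Finset.sum_mul_sq_le_sq_mul_sq _ _ _
      have hrowB : ∑ a : Fin r, (fcol k r a tB)^2 = (r:ℝ)/k := by
        rw [Fin.sum_univ_eq_sum_range (fun a => (fcol k r a tB)^2) r]
        exact fcol_row k r hr hkr tB
      have hrowC : ∑ a : Fin r, (fcol k r a tC)^2 = (r:ℝ)/k := by
        rw [Fin.sum_univ_eq_sum_range (fun a => (fcol k r a tC)^2) r]
        exact fcol_row k r hr hkr tC
      rw [hrowB, hrowC] at hsq
      have hrk : (0:ℝ) ≤ (r:ℝ)/k := by positivity
      calc |∑ a : Fin r, fcol k r a tB * fcol k r a tC|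
          = Real.sqrt ((∑ a : Fin r, fcol k r a tB * fcol k r a tC)^2) :=
            (Real.sqrt_sq_eq_abs _).symm
        _ ≤ Real.sqrt ((r:ℝ)/k * ((r:ℝ)/k)) := Real.sqrt_le_sqrt hsq
        _ = (r:ℝ)/k := Real.sqrt_mul_self hrk
    · have : ∀ a : Fin r, GG k r B hB y a * GG k r C hC y a = 0 := by
        intro a; rw [GG_zero k r C hC y hyC, mul_zero]
      rw [Finset.sum_congr rfl (fun a _ => this a), Finset.sum_const, smul_zero, abs_zero]
      split <;> positivity
  · have : ∀ a : Fin r, GG k r B hB y a * GG k r C hC y a = 0 := by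
      intro a; rw [GG_zero k r B hB y hyB, zero_mul]
    rw [Finset.sum_congr rfl (fun a _ => this a), Finset.sum_const, smul_zero, abs_zero]
    split <;> positivity

def VV {n p : ℕ} (k r : ℕ) (hpn : p = r + n) (δ : ℝ) (B : Finset (Fin n)) (hB : B.card = k) :
    Matrix (Fin p) (Fin r) ℝ :=
  fun x a => if hx : (x:ℕ) < r then (if (x:ℕ) = (a:ℕ) then Real.sqrt (1-δ) else 0)
    else Real.sqrt δ * GG k r B hB ⟨(x:ℕ) - r, by omega⟩ a

lemma sum_split {p r n : ℕ} (hpn : p = r + n) (φ : Fin p → ℝ) :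
    ∑ x : Fin p, φ x
      = (∑ x : Fin r, φ (Fin.cast hpn.symm (finSumFinEquiv (Sum.inl x))))
        + ∑ y : Fin n, φ (Fin.cast hpn.symm (finSumFinEquiv (Sum.inr y))) := by
  rw [← Equiv.sum_comp ((finSumFinEquiv).trans (finCongr hpn.symm)) φ, Fintype.sum_sum_type]
  rfl

lemma VV_top {n p : ℕ} (k r : ℕ) (hpn : p = r + n) (δ : ℝ) (B : Finset (Fin n))
    (hB : B.card = k) (x : Fin r) (a : Fin r) :
    VV k r hpn δ B hB (Fin.cast hpn.symm (finSumFinEquiv (Sum.inl x))) a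
      = if (x:ℕ) = (a:ℕ) then Real.sqrt (1-δ) else 0 := by
  have hval : ((Fin.cast hpn.symm (finSumFinEquiv (Sum.inl x))) : ℕ) = (x:ℕ) := by simp
  rw [VV]
  split
  · rename_i hx
    rw [hval]
  · rename_i hx
    rw [hval] at hx
    exact absurd x.2 hx

lemma VV_bot {n p : ℕ} (k r : ℕ) (hpn : p = r + n) (δ : ℝ) (B : Finset (Fin n))
    (hB : B.card = k) (y : Fin n) (a : Fin r) :
    VV k r hpn δ B hB (Fin.cast hpn.symm (finSumFinEquiv (Sum.inr y))) a
      = Real.sqrt δ * GG k r B hB y a := by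
  have hval : ((Fin.cast hpn.symm (finSumFinEquiv (Sum.inr y))) : ℕ) = r + (y:ℕ) := by simp
  rw [VV]
  split
  · rename_i hx
    rw [hval] at hx
    omega
  · rename_i hx
    have harg : ∀ (h : ((Fin.cast hpn.symm (finSumFinEquiv (Sum.inr y))) : ℕ) - r < n),
        (⟨((Fin.cast hpn.symm (finSumFinEquiv (Sum.inr y))) : ℕ) - r, h⟩ : Fin n) = y := by
      intro h; apply Fin.ext; simp [hval]
    rw [harg]

lemma VV_gram {n p : ℕ} (k r : ℕ) (hr : 1 ≤ r) (hkr : 2*r ≤ k) (hpn : p = r + n)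
    (δ : ℝ) (hδ0 : 0 ≤ δ) (hδ1 : δ ≤ 1) (B : Finset (Fin n)) (hB : B.card = k) :
    (VV k r hpn δ B hB)ᵀ * VV k r hpn δ B hB = 1 := by
  ext a b
  rw [Matrix.mul_apply]
  have htr : ∀ x, (VV k r hpn δ B hB)ᵀ a x * VV k r hpn δ B hB x b
      = VV k r hpn δ B hB x a * VV k r hpn δ B hB x b := fun x => by
    rw [Matrix.transpose_apply]
  rw [Finset.sum_congr rfl (fun x _ => htr x)]
  rw [sum_split hpn (fun x => VV k r hpn δ B hB x a * VV k r hpn δ B hB x b)]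
  have htop : (∑ x : Fin r, VV k r hpn δ B hB (Fin.cast hpn.symm (finSumFinEquiv (Sum.inl x))) a
      * VV k r hpn δ B hB (Fin.cast hpn.symm (finSumFinEquiv (Sum.inl x))) b)
      = if a = b then 1 - δ else 0 := by
    simp only [VV_top]
    have hpoint : ∀ x : Fin r,
        (if (x:ℕ) = (a:ℕ) then Real.sqrt (1-δ) else 0)
          * (if (x:ℕ) = (b:ℕ) then Real.sqrt (1-δ) else 0)
        = if x = a then (if a = b then 1 - δ else 0) else 0 := by
      intro x
      rcases eq_or_ne x a with rfl | h1
      · rcases eq_or_ne x b with rfl | h2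
        · simp [Real.mul_self_sqrt (by linarith : (0:ℝ) ≤ 1 - δ)]
        · simp [h2, fun h : (x:ℕ) = (b:ℕ) => h2 (Fin.val_injective h), Fin.val_inj]
      · simp [h1, fun h : (x:ℕ) = (a:ℕ) => h1 (Fin.val_injective h), Fin.val_inj]
    rw [Finset.sum_congr rfl (fun x _ => hpoint x)]
    simp
  have hbot : (∑ y : Fin n, VV k r hpn δ B hB (Fin.cast hpn.symm (finSumFinEquiv (Sum.inr y))) a
      * VV k r hpn δ B hB (Fin.cast hpn.symm (finSumFinEquiv (Sum.inr y))) b)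
      = if a = b then δ else 0 := by
    simp only [VV_bot]
    have hpoint : ∀ y : Fin n,
        (Real.sqrt δ * GG k r B hB y a) * (Real.sqrt δ * GG k r B hB y b)
        = δ * (GG k r B hB y a * GG k r B hB y b) := by
      intro y
      rw [mul_mul_mul_comm, Real.mul_self_sqrt hδ0]
    rw [Finset.sum_congr rfl (fun y _ => hpoint y), ← Finset.mul_sum,
      GG_gram k r hr hkr B hB a b]
    split <;> simp
  rw [htop, hbot, Matrix.one_apply]
  split <;> ring

lemma VV_sparse {n p : ℕ} (k r : ℕ) (hpn : p = r + n) (δ : ℝ) (B : Finset (Fin n))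
    (hB : B.card = k) :
    Set.ncard {x | VV k r hpn δ B hB x ≠ 0} ≤ r + k := by
  classical
  set T1 : Finset (Fin p) :=
    Finset.univ.image (fun x : Fin r => Fin.cast hpn.symm (finSumFinEquiv (Sum.inl x))) with hT1
  set T2 : Finset (Fin p) :=
    B.image (fun y => Fin.cast hpn.symm (finSumFinEquiv (Sum.inr y))) with hT2
  have hsub : {x | VV k r hpn δ B hB x ≠ 0} ⊆ ↑(T1 ∪ T2) := by
    intro x hx
    obtain ⟨a, ha⟩ := Function.ne_iff.mp hx
    rw [Finset.coe_union]
    by_cases hxr : (x:ℕ) < r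
    · left
      rw [Finset.mem_coe, hT1, Finset.mem_image]
      refine ⟨⟨(x:ℕ), hxr⟩, Finset.mem_univ _, ?_⟩
      apply Fin.ext
      simp
    · right
      rw [Finset.mem_coe, hT2, Finset.mem_image]
      have hval : VV k r hpn δ B hB x a
          = Real.sqrt δ * GG k r B hB ⟨(x:ℕ) - r, by omega⟩ a := by
        rw [VV, dif_neg hxr]
      have hGne : GG k r B hB ⟨(x:ℕ) - r, by omega⟩ a ≠ 0 := by
        intro h0
        rw [hval, h0, mul_zero] at ha
        exact ha rfl
      have hmem : (⟨(x:ℕ) - r, by omega⟩ : Fin n) ∈ B := by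
        by_contra hmem
        exact hGne (GG_zero k r B hB _ hmem a)
      refine ⟨⟨(x:ℕ) - r, by omega⟩, hmem, ?_⟩
      apply Fin.ext
      simp
      omega
  calc Set.ncard {x | VV k r hpn δ B hB x ≠ 0}
      ≤ Set.ncard (↑(T1 ∪ T2) : Set (Fin p)) :=
        Set.ncard_le_ncard hsub (Finset.finite_toSet _)
    _ = (T1 ∪ T2).card := Set.ncard_coe_finset _
    _ ≤ T1.card + T2.card := Finset.card_union_le _ _
    _ ≤ r + k := by
        have h1 : T1.card ≤ r := by
          calc T1.card ≤ (Finset.univ : Finset (Fin r)).card := Finset.card_image_le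
            _ = r := by simp
        have h2 : T2.card ≤ k := by
          calc T2.card ≤ B.card := Finset.card_image_le
            _ = k := hB
        omega

lemma VV_dist {n p : ℕ} (k r : ℕ) (hr : 1 ≤ r) (hkr : 2*r ≤ k) (hpn : p = r + n)
    (δ : ℝ) (hδ0 : 0 ≤ δ) (B : Finset (Fin n)) (hB : B.card = k)
    (C : Finset (Fin n)) (hC : C.card = k) (c : ℕ) (hcap : (B ∩ C).card ≤ c)
    (hc : 4*c ≤ 3*k) :
    δ * r / 2 ≤ mfrobSq (VV k r hpn δ B hB - VV k r hpn δ C hC) ∧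
      mfrobSq (VV k r hpn δ B hB - VV k r hpn δ C hC) ≤ 4 * δ * r := by
  have hk0 : 0 < k := by omega
  have hk0' : (0:ℝ) < k := by exact_mod_cast hk0
  set G := ∑ y : Fin n, ∑ a : Fin r, GG k r B hB y a * GG k r C hC y a with hG
  have hnorm : ∀ (D : Finset (Fin n)) (hD : D.card = k),
      ∑ y : Fin n, ∑ a : Fin r, (GG k r D hD y a)^2 = (r:ℝ) := by
    intro D hD
    rw [Finset.sum_comm]
    have h1 : ∀ a : Fin r, ∑ y : Fin n, (GG k r D hD y a)^2 = 1 := by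
      intro a
      have := GG_gram k r hr hkr D hD a a
      rw [if_pos rfl] at this
      rw [← this]
      apply Finset.sum_congr rfl
      intro y _
      ring
    rw [Finset.sum_congr rfl (fun a _ => h1 a)]
    simp
  have hsum : mfrobSq (VV k r hpn δ B hB - VV k r hpn δ C hC) = δ * (2*r - 2*G) := by
    rw [mfrobSq]
    rw [sum_split hpn (fun x => ∑ a : Fin r,
      ((VV k r hpn δ B hB - VV k r hpn δ C hC) x a)^2)]
    have htop : (∑ x : Fin r, ∑ a : Fin r,
        ((VV k r hpn δ B hB - VV k r hpn δ C hC)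
          (Fin.cast hpn.symm (finSumFinEquiv (Sum.inl x))) a)^2) = 0 := by
      apply Finset.sum_eq_zero
      intro x _
      apply Finset.sum_eq_zero
      intro a _
      rw [Matrix.sub_apply, VV_top, VV_top, sub_self]
      ring
    have hbot : (∑ y : Fin n, ∑ a : Fin r,
        ((VV k r hpn δ B hB - VV k r hpn δ C hC)
          (Fin.cast hpn.symm (finSumFinEquiv (Sum.inr y))) a)^2)
        = δ * (2*r - 2*G) := by
      have hpt : ∀ (y : Fin n) (a : Fin r),
          ((VV k r hpn δ B hB - VV k r hpn δ C hC)
            (Fin.cast hpn.symm (finSumFinEquiv (Sum.inr y))) a)^2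
          = δ * (GG k r B hB y a)^2 + δ * (GG k r C hC y a)^2
            - 2 * δ * (GG k r B hB y a * GG k r C hC y a) := by
        intro y a
        rw [Matrix.sub_apply, VV_bot, VV_bot]
        have h2 : (Real.sqrt δ)^2 = δ := Real.sq_sqrt hδ0
        set X := GG k r B hB y a
        set Y := GG k r C hC y a
        linear_combination (X^2 - 2*X*Y + Y^2) * h2
      rw [Finset.sum_congr rfl (fun y _ => Finset.sum_congr rfl (fun a _ => hpt y a))]
      have hsplit : ∀ y : Fin n, (∑ a : Fin r,
          (δ * (GG k r B hB y a)^2 + δ * (GG k r C hC y a)^2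
            - 2 * δ * (GG k r B hB y a * GG k r C hC y a)))
          = δ * (∑ a : Fin r, (GG k r B hB y a)^2)
            + δ * (∑ a : Fin r, (GG k r C hC y a)^2)
            - 2 * δ * (∑ a : Fin r, GG k r B hB y a * GG k r C hC y a) := by
        intro y
        rw [Finset.sum_sub_distrib, Finset.sum_add_distrib, ← Finset.mul_sum,
          ← Finset.mul_sum, ← Finset.mul_sum]
      rw [Finset.sum_congr rfl (fun y _ => hsplit y)]
      rw [Finset.sum_sub_distrib, Finset.sum_add_distrib, ← Finset.mul_sum,
        ← Finset.mul_sum, ← Finset.mul_sum, hnorm B hB, hnorm C hC, ← hG]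
      ring
    rw [htop, hbot, zero_add]
  have hGabs : |G| ≤ ((B ∩ C).card : ℝ) * ((r:ℝ)/k) := by
    calc |G| ≤ ∑ y : Fin n, |∑ a : Fin r, GG k r B hB y a * GG k r C hC y a| :=
          Finset.abs_sum_le_sum_abs _ _
      _ ≤ ∑ y : Fin n, (if y ∈ B ∩ C then (r:ℝ)/k else 0) :=
          Finset.sum_le_sum (fun y _ => GG_ip_bound k r hr hkr B hB C hC y)
      _ = ((B ∩ C).card : ℝ) * ((r:ℝ)/k) := by
          rw [Finset.sum_ite_mem, Finset.univ_inter, Finset.sum_const, nsmul_eq_mul]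
  have hcardk : (B ∩ C).card ≤ k := by
    calc (B ∩ C).card ≤ B.card := Finset.card_le_card Finset.inter_subset_left
      _ = k := hB
  have hGr : |G| ≤ (r:ℝ) := by
    calc |G| ≤ ((B ∩ C).card : ℝ) * ((r:ℝ)/k) := hGabs
      _ ≤ (k:ℝ) * ((r:ℝ)/k) := by
          apply mul_le_mul_of_nonneg_right _ (by positivity)
          exact_mod_cast hcardk
      _ = (r:ℝ) := by field_simp
  have hG34 : G ≤ 3*(r:ℝ)/4 := by
    have h1 : G ≤ |G| := le_abs_self G
    have h2 : ((B ∩ C).card : ℝ) ≤ (c:ℝ) := by exact_mod_cast hcap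
    have h3 : (c:ℝ) ≤ 3*(k:ℝ)/4 := by
      have : (4*c : ℝ) ≤ 3*(k:ℝ) := by exact_mod_cast hc
      linarith
    have h4 : ((B ∩ C).card : ℝ) * ((r:ℝ)/k) ≤ (3*(k:ℝ)/4) * ((r:ℝ)/k) := by
      apply mul_le_mul_of_nonneg_right (h2.trans h3) (by positivity)
    have h5 : (3*(k:ℝ)/4) * ((r:ℝ)/k) = 3*(r:ℝ)/4 := by field_simp
    calc G ≤ |G| := h1
      _ ≤ ((B ∩ C).card : ℝ) * ((r:ℝ)/k) := hGabs
      _ ≤ 3*(r:ℝ)/4 := by rw [← h5]; exact h4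
  have hGneg : -(r:ℝ) ≤ G := by
    have := neg_abs_le G
    linarith
  constructor
  · rw [hsum]
    nlinarith [hδ0]
  · rw [hsum]
    nlinarith [hδ0]


/-- Packing of sparse orthonormal frames: with `s' = s − r`, `p' = p − r` and
`N = ⌊2((p'−s'+1)/(4s'))^{s'/4}⌋`, there exist `N` orthonormal `s`-row-sparse
matrices in `ℝ^{p×r}` with pairwise squared Frobenius distances between
`δr/2` and `4δr`. -/
theorem exists_sparse_orthonormal_packing
    (r s p : ℕ) (hr : 1 ≤ r) (hs : 3 * r ≤ s) (hp : 10 * (s - r) < p - r)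
    (δ : ℝ) (hδ0 : 0 < δ) (hδ1 : δ ≤ 1) :
    ∃ V : Fin (Nat.floor
        (2 * ((((p - r : ℕ) : ℝ) - ((s - r : ℕ) : ℝ) + 1) / (4 * ((s - r : ℕ) : ℝ)))
          ^ (((s - r : ℕ) : ℝ) / 4))) → Matrix (Fin p) (Fin r) ℝ,
      (∀ i, (V i)ᵀ * V i = 1) ∧
      (∀ i, rowSparse s (V i)) ∧
      ∀ i j, i ≠ j →
        δ * r / 2 ≤ mfrobSq (V i - V j) ∧ mfrobSq (V i - V j) ≤ 4 * δ * r := by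
  classical
  set k := s - r with hk
  set n := p - r with hn
  have hkr : 2*r ≤ k := by omega
  have hk2 : 2 ≤ k := by omega
  have hnk : 10*k < n := hp
  have hpn : p = r + n := by omega
  set d := 3*k/8 with hd
  set c := k - 1 - d with hc
  set N := Nat.floor (2 * (((n : ℝ) - (k : ℝ) + 1) / (4 * (k : ℝ))) ^ ((k : ℝ) / 4)) with hN
  -- counting inequality in ℕ
  have hbase0 : (0:ℝ) ≤ 2 * (((n : ℝ) - (k : ℝ) + 1) / (4 * (k : ℝ))) ^ ((k : ℝ) / 4) := by
    have h1 : (0:ℝ) ≤ ((n : ℝ) - (k : ℝ) + 1) / (4 * (k : ℝ)) := by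
      have h2 : (k:ℝ) ≤ (n:ℝ) := by exact_mod_cast (by omega : k ≤ n)
      have hk0 : (0:ℝ) < (k:ℝ) := by exact_mod_cast (by omega : 0 < k)
      apply div_nonneg (by linarith) (by positivity)
    positivity
  have hNle : (N:ℝ) ≤ 2 * (((n : ℝ) - (k : ℝ) + 1) / (4 * (k : ℝ))) ^ ((k : ℝ) / 4) :=
    Nat.floor_le hbase0
  have hNT : N * (∑ e ∈ Finset.range (d+1), k.choose e * (n-k).choose e) ≤ n.choose k := by
    have hreal : (N:ℝ) * (∑ e ∈ Finset.range (d+1), (k.choose e : ℝ) * ((n-k).choose e : ℝ))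
        ≤ (n.choose k : ℝ) := by
      calc (N:ℝ) * (∑ e ∈ Finset.range (d+1), (k.choose e : ℝ) * ((n-k).choose e : ℝ))
          ≤ (2 * (((n : ℝ) - (k : ℝ) + 1) / (4 * (k : ℝ))) ^ ((k : ℝ) / 4))
            * (∑ e ∈ Finset.range (d+1), (k.choose e : ℝ) * ((n-k).choose e : ℝ)) := by
            apply mul_le_mul_of_nonneg_right hNle
            apply Finset.sum_nonneg
            intro e _
            positivity
        _ ≤ (n.choose k : ℝ) := count_ineq n k d hk2 (by omega) hnk
    have : ((N * (∑ e ∈ Finset.range (d+1), k.choose e * (n-k).choose e) : ℕ) : ℝ)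
        ≤ ((n.choose k : ℕ) : ℝ) := by
      push_cast
      exact hreal
    exact_mod_cast this
  obtain ⟨B, hBinj, hBcard, hBint⟩ := exists_packing n k d N (by omega) (by omega) (by omega) hNT
  refine ⟨fun i => VV k r hpn δ (B i) (hBcard i), ?_, ?_, ?_⟩
  · intro i
    exact VV_gram k r hr hkr hpn δ (le_of_lt hδ0) hδ1 (B i) (hBcard i)
  · intro i
    unfold rowSparse
    calc Set.ncard {x | VV k r hpn δ (B i) (hBcard i) x ≠ 0} ≤ r + k :=
          VV_sparse k r hpn δ (B i) (hBcard i)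
      _ ≤ s := by omega
  · intro i j hij
    have hne : B i ≠ B j := fun h => hij (hBinj h)
    have hcap : ((B i) ∩ (B j)).card ≤ c := hBint i j hij
    exact VV_dist k r hr hkr hpn δ (le_of_lt hδ0) (B i) (hBcard i) (B j) (hBcard j)
      c hcap (by omega)


end
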